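/- arXiv:math/9812140 — 7 statements merged into one kernel-verified Lean document; each statement's English description precedes it below -/
import Mathlib

section
/- Let q > 0 be a real number. The deformed two-mode annihilation operators q-commute among themselves and the deformed creation operators q-commute among themselves: A↓ ∘ A↑ = q • (A↑ ∘ A↓) and A⁺_↑ ∘ A⁺_↓ = q • (A⁺_↓ ∘ A⁺_↑) as operators on the two-mode bosonic Fock space. -/
/-- **q-commutation among the deformed two-mode annihilators / creators.**
For `q > 0`, Fiore's deformed operators on the two-mode bosonic Fock space
`(ℕ × ℕ) →₀ ℝ`, defined on the standard basis `e_{m,n}` (with `(n)_{q²} = ∑_{k<n} q^{2k}`) by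
`A⁺_↑ e_{m,n} = √((m+1)_{q²}) qⁿ e_{m+1,n}`, `A↑ e_{m,n} = √((m)_{q²}) qⁿ e_{m-1,n}`,
`A⁺_↓ e_{m,n} = √((n+1)_{q²}) e_{m,n+1}`, `A↓ e_{m,n} = √((n)_{q²}) e_{m,n-1}`,
satisfy `A↓ ∘ A↑ = q • (A↑ ∘ A↓)` and `A⁺_↑ ∘ A⁺_↓ = q • (A⁺_↓ ∘ A⁺_↑)`. -/
theorem deformed_two_mode_q_commutation
    (q : ℝ) (hq : 0 < q)
    (Au Ad Apu Apd : ((ℕ × ℕ) →₀ ℝ) →ₗ[ℝ] ((ℕ × ℕ) →₀ ℝ))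
    (hAu0 : ∀ n : ℕ, Au (Finsupp.single (0, n) 1) = 0)
    (hAu : ∀ m n : ℕ, Au (Finsupp.single (m + 1, n) 1) =
      (Real.sqrt (∑ k ∈ Finset.range (m + 1), q ^ (2 * k)) * q ^ n) •
        Finsupp.single (m, n) 1)
    (hApu : ∀ m n : ℕ, Apu (Finsupp.single (m, n) 1) =
      (Real.sqrt (∑ k ∈ Finset.range (m + 1), q ^ (2 * k)) * q ^ n) •
        Finsupp.single (m + 1, n) 1)
    (hAd0 : ∀ m : ℕ, Ad (Finsupp.single (m, 0) 1) = 0)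
    (hAd : ∀ m n : ℕ, Ad (Finsupp.single (m, n + 1) 1) =
      Real.sqrt (∑ k ∈ Finset.range (n + 1), q ^ (2 * k)) • Finsupp.single (m, n) 1)
    (hApd : ∀ m n : ℕ, Apd (Finsupp.single (m, n) 1) =
      Real.sqrt (∑ k ∈ Finset.range (n + 1), q ^ (2 * k)) • Finsupp.single (m, n + 1) 1) :
    Ad ∘ₗ Au = q • (Au ∘ₗ Ad) ∧ Apu ∘ₗ Apd = q • (Apd ∘ₗ Apu) := by
  constructor
  · apply Finsupp.lhom_ext
    rintro ⟨m, n⟩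
    intro b
    simp only [LinearMap.comp_apply, LinearMap.smul_apply]
    rw [show (Finsupp.single (m,n) b : (ℕ × ℕ) →₀ ℝ) = b • Finsupp.single (m,n) 1 by
      simp, map_smul, map_smul, map_smul, map_smul, smul_comm q b]
    congr 1
    match m, n with
    | 0, n =>
      rw [hAu0, map_zero]
      cases n with
      | zero => rw [hAd0, map_zero, smul_zero]
      | succ n =>
        rw [hAd _ n, map_smul, hAu0, smul_zero, smul_zero]
    | m+1, 0 =>
      rw [hAu, map_smul, hAd0, smul_zero, hAd0, map_zero, smul_zero]
    | m+1, n+1 =>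
      rw [hAu, map_smul, hAd _ n, hAd _ n, map_smul, hAu, smul_smul, smul_smul, smul_smul]
      congr 1
      ring
  · apply Finsupp.lhom_ext
    rintro ⟨m, n⟩
    intro b
    simp only [LinearMap.comp_apply, LinearMap.smul_apply]
    rw [show (Finsupp.single (m,n) b : (ℕ × ℕ) →₀ ℝ) = b • Finsupp.single (m,n) 1 by
      simp, map_smul, map_smul, map_smul, map_smul, smul_comm q b]
    congr 1
    rw [hApd, map_smul, hApu, hApu, map_smul, hApd, smul_smul, smul_smul, smul_smul]
    congr 1
    ring
end

section
/- Let q > 0 be a real number. The deformed creation and annihilation operators of different modes satisfy the q-exchange relations A↑ ∘ A⁺_↓ = q • (A⁺_↓ ∘ A↑) and A↓ ∘ A⁺_↑ = q • (A⁺_↑ ∘ A↓) as operators on the two-mode bosonic Fock space. -/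
/-- **q-exchange relations between deformed operators of different modes.**
For `q > 0`, Fiore's deformed operators on the two-mode bosonic Fock space
satisfy `A↑ ∘ A⁺_↓ = q • (A⁺_↓ ∘ A↑)` and `A↓ ∘ A⁺_↑ = q • (A⁺_↑ ∘ A↓)`. -/
theorem deformed_two_mode_q_exchange
    (q : ℝ) (hq : 0 < q)
    (Au Ad Apu Apd : ((ℕ × ℕ) →₀ ℝ) →ₗ[ℝ] ((ℕ × ℕ) →₀ ℝ))
    (hAu0 : ∀ n : ℕ, Au (Finsupp.single (0, n) 1) = 0)
    (hAu : ∀ m n : ℕ, Au (Finsupp.single (m + 1, n) 1) =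
      (Real.sqrt (∑ k ∈ Finset.range (m + 1), q ^ (2 * k)) * q ^ n) •
        Finsupp.single (m, n) 1)
    (hApu : ∀ m n : ℕ, Apu (Finsupp.single (m, n) 1) =
      (Real.sqrt (∑ k ∈ Finset.range (m + 1), q ^ (2 * k)) * q ^ n) •
        Finsupp.single (m + 1, n) 1)
    (hAd0 : ∀ m : ℕ, Ad (Finsupp.single (m, 0) 1) = 0)
    (hAd : ∀ m n : ℕ, Ad (Finsupp.single (m, n + 1) 1) =
      Real.sqrt (∑ k ∈ Finset.range (n + 1), q ^ (2 * k)) • Finsupp.single (m, n) 1)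
    (hApd : ∀ m n : ℕ, Apd (Finsupp.single (m, n) 1) =
      Real.sqrt (∑ k ∈ Finset.range (n + 1), q ^ (2 * k)) • Finsupp.single (m, n + 1) 1) :
    Au ∘ₗ Apd = q • (Apd ∘ₗ Au) ∧ Ad ∘ₗ Apu = q • (Apu ∘ₗ Ad) := by
  constructor
  · apply Finsupp.lhom_ext
    rintro ⟨m, n⟩ r
    have : Finsupp.single (m, n) r = r • Finsupp.single (m, n) (1:ℝ) := by
      simp [Finsupp.smul_single]
    rw [this]
    simp only [map_smul, LinearMap.smul_apply, LinearMap.coe_comp, Function.comp_apply]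
    congr 1
    cases m with
    | zero =>
      simp only [hApd, map_smul, hAu0, smul_zero, map_zero]
    | succ m =>
      simp only [hApd, map_smul, hAu, smul_smul]
      congr 1
      ring
  · apply Finsupp.lhom_ext
    rintro ⟨m, n⟩ r
    have : Finsupp.single (m, n) r = r • Finsupp.single (m, n) (1:ℝ) := by
      simp [Finsupp.smul_single]
    rw [this]
    simp only [map_smul, LinearMap.smul_apply, LinearMap.coe_comp, Function.comp_apply]
    congr 1
    cases n with
    | zero =>
      simp only [hApu, map_smul, hAd0, smul_zero, map_zero]
    | succ n =>
      simp only [hApu, map_smul, hAd, hApu, smul_smul]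
      congr 1
      ring
end

section
/- Let q > 0 be a real number. The up-mode deformed operators satisfy the inhomogeneous q-deformed relation A↑ ∘ A⁺_↑ = Id + q² • (A⁺_↑ ∘ A↑) + (q² − 1) • (A⁺_↓ ∘ A↓) as operators on the two-mode bosonic Fock space; together with the other exchange relations this shows the deformed operators satisfy the U_q(sl(2))-covariant deformed commutation relations of the q-deformed two-dimensional Weyl algebra. -/
lemma geom_key (x : ℝ) (a b : ℕ) :
    (∑ k ∈ Finset.range (a + 1), x ^ k) * x ^ b
      = 1 + x * ((∑ k ∈ Finset.range a, x ^ k) * x ^ b)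
        + (x - 1) * (∑ k ∈ Finset.range b, x ^ k) := by
  have h1 : (∑ k ∈ Finset.range (a + 1), x ^ k) = x * (∑ k ∈ Finset.range a, x ^ k) + 1 :=
    geom_sum_succ
  have h2 : (∑ k ∈ Finset.range b, x ^ k) * (x - 1) = x ^ b - 1 := geom_sum_mul x b
  linear_combination x ^ b * h1 - h2

/-- **Inhomogeneous q-deformed relation for the up mode.**
For `q > 0`, Fiore's deformed operators on the two-mode bosonic Fock space
satisfy `A↑ ∘ A⁺_↑ = Id + q² • (A⁺_↑ ∘ A↑) + (q² − 1) • (A⁺_↓ ∘ A↓)`,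
completing the U_q(sl(2))-covariant deformed commutation relations of the
q-deformed two-dimensional Weyl algebra. -/
theorem deformed_up_mode_ccr
    (q : ℝ) (hq : 0 < q)
    (Au Ad Apu Apd : ((ℕ × ℕ) →₀ ℝ) →ₗ[ℝ] ((ℕ × ℕ) →₀ ℝ))
    (hAu0 : ∀ n : ℕ, Au (Finsupp.single (0, n) 1) = 0)
    (hAu : ∀ m n : ℕ, Au (Finsupp.single (m + 1, n) 1) =
      (Real.sqrt (∑ k ∈ Finset.range (m + 1), q ^ (2 * k)) * q ^ n) •
        Finsupp.single (m, n) 1)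
    (hApu : ∀ m n : ℕ, Apu (Finsupp.single (m, n) 1) =
      (Real.sqrt (∑ k ∈ Finset.range (m + 1), q ^ (2 * k)) * q ^ n) •
        Finsupp.single (m + 1, n) 1)
    (hAd0 : ∀ m : ℕ, Ad (Finsupp.single (m, 0) 1) = 0)
    (hAd : ∀ m n : ℕ, Ad (Finsupp.single (m, n + 1) 1) =
      Real.sqrt (∑ k ∈ Finset.range (n + 1), q ^ (2 * k)) • Finsupp.single (m, n) 1)
    (hApd : ∀ m n : ℕ, Apd (Finsupp.single (m, n) 1) =
      Real.sqrt (∑ k ∈ Finset.range (n + 1), q ^ (2 * k)) • Finsupp.single (m, n + 1) 1) :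
    Au ∘ₗ Apu = LinearMap.id + q ^ 2 • (Apu ∘ₗ Au) + (q ^ 2 - 1) • (Apd ∘ₗ Ad) := by
  have hx : ∀ k : ℕ, q ^ (2 * k) = (q ^ 2) ^ k := fun k => by rw [pow_mul]
  have hS : ∀ j : ℕ, (0 : ℝ) ≤ ∑ k ∈ Finset.range j, q ^ (2 * k) :=
    fun j => Finset.sum_nonneg fun k _ => by positivity
  have hsq : ∀ j : ℕ, Real.sqrt (∑ k ∈ Finset.range j, q ^ (2 * k)) *
      Real.sqrt (∑ k ∈ Finset.range j, q ^ (2 * k)) = ∑ k ∈ Finset.range j, q ^ (2 * k) :=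
    fun j => Real.mul_self_sqrt (hS j)
  apply Finsupp.lhom_ext
  rintro ⟨m, n⟩ r
  have hr : (Finsupp.single (m, n) r : (ℕ × ℕ) →₀ ℝ) = r • Finsupp.single (m, n) 1 := by
    rw [Finsupp.smul_single, smul_eq_mul, mul_one]
  simp only [hr, map_smul, LinearMap.add_apply, LinearMap.smul_apply, LinearMap.comp_apply,
    LinearMap.id_apply]
  congr 1
  -- reduce to the statement at `single (m, n) 1`
  have key : ∀ a b : ℕ,
      (∑ k ∈ Finset.range (a + 1), q ^ (2 * k)) * (q ^ b * q ^ b)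
        = 1 + q ^ 2 * ((∑ k ∈ Finset.range a, q ^ (2 * k)) * (q ^ b * q ^ b))
          + (q ^ 2 - 1) * (∑ k ∈ Finset.range b, q ^ (2 * k)) := by
    intro a b
    have : q ^ b * q ^ b = (q ^ 2) ^ b := by ring
    simp only [hx, this]
    exact geom_key (q ^ 2) a b
  have lhs : Au (Apu (Finsupp.single (m, n) 1)) =
      ((∑ k ∈ Finset.range (m + 1), q ^ (2 * k)) * (q ^ n * q ^ n)) •
        Finsupp.single (m, n) 1 := by
    rw [hApu, map_smul, hAu, smul_smul, mul_mul_mul_comm, hsq (m + 1)]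
  have auterm : q ^ 2 • Apu (Au (Finsupp.single (m, n) 1)) =
      (q ^ 2 * ((∑ k ∈ Finset.range m, q ^ (2 * k)) * (q ^ n * q ^ n))) •
        Finsupp.single (m, n) 1 := by
    cases m with
    | zero => simp [hAu0]
    | succ m =>
      rw [hAu, map_smul, hApu, smul_smul, smul_smul, mul_assoc,
        mul_mul_mul_comm, hsq (m + 1)]
  have adterm : (q ^ 2 - 1) • Apd (Ad (Finsupp.single (m, n) 1)) =
      ((q ^ 2 - 1) * (∑ k ∈ Finset.range n, q ^ (2 * k))) •
        Finsupp.single (m, n) 1 := by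
    cases n with
    | zero => simp [hAd0]
    | succ n =>
      rw [hAd, map_smul, hApd, smul_smul, smul_smul, mul_assoc, hsq (n + 1)]
  rw [lhs, auterm, adterm, key m n, add_smul, add_smul, one_smul]
end

section
/- Let q > 0 be a real number. The deformed quadratic U_q(sl(2))-invariant I¹_h = A⁺_↑ ∘ A↑ + A⁺_↓ ∘ A↓ acts diagonally on the two-mode Fock basis with eigenvalue the q²-number of the total undeformed occupation number: (A⁺_↑ ∘ A↑ + A⁺_↓ ∘ A↓) e_{m,n} = (m+n)_{q²} • e_{m,n}. In particular the deformed invariant I¹_h is a (non-polynomial) function of the undeformed sl(2)-invariant total number operator, illustrating that deformed and undeformed invariant subalgebras coincide while the invariants themselves differ. -/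
lemma geom_split (x : ℝ) (m n : ℕ) :
    (∑ k ∈ Finset.range m, x ^ (2 * k)) * x ^ (2 * n) +
      ∑ k ∈ Finset.range n, x ^ (2 * k) = ∑ k ∈ Finset.range (m + n), x ^ (2 * k) := by
  rw [add_comm m n, Finset.sum_range_add]
  have : ∀ i, x ^ (2 * (n + i)) = x ^ (2 * i) * x ^ (2 * n) := by
    intro i; rw [← pow_add]; ring_nf
  simp_rw [this, ← Finset.sum_mul]
  ring

lemma sum_nonneg' (q : ℝ) (hq : 0 < q) (m : ℕ) :
    0 ≤ ∑ k ∈ Finset.range m, q ^ (2 * k) :=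
  Finset.sum_nonneg fun k _ => pow_nonneg hq.le _

/-- **The deformed quadratic invariant is a function of the total number operator.**
For `q > 0`, the deformed quadratic U_q(sl(2))-invariant
`I¹_h = A⁺_↑ ∘ A↑ + A⁺_↓ ∘ A↓` acts diagonally on the two-mode Fock basis with
eigenvalue the q²-number of the total occupation number:
`(A⁺_↑ ∘ A↑ + A⁺_↓ ∘ A↓) e_{m,n} = (m+n)_{q²} • e_{m,n}`. -/
theorem deformed_quadratic_invariant_diagonal
    (q : ℝ) (hq : 0 < q)
    (Au Ad Apu Apd : ((ℕ × ℕ) →₀ ℝ) →ₗ[ℝ] ((ℕ × ℕ) →₀ ℝ))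
    (hAu0 : ∀ n : ℕ, Au (Finsupp.single (0, n) 1) = 0)
    (hAu : ∀ m n : ℕ, Au (Finsupp.single (m + 1, n) 1) =
      (Real.sqrt (∑ k ∈ Finset.range (m + 1), q ^ (2 * k)) * q ^ n) •
        Finsupp.single (m, n) 1)
    (hApu : ∀ m n : ℕ, Apu (Finsupp.single (m, n) 1) =
      (Real.sqrt (∑ k ∈ Finset.range (m + 1), q ^ (2 * k)) * q ^ n) •
        Finsupp.single (m + 1, n) 1)
    (hAd0 : ∀ m : ℕ, Ad (Finsupp.single (m, 0) 1) = 0)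
    (hAd : ∀ m n : ℕ, Ad (Finsupp.single (m, n + 1) 1) =
      Real.sqrt (∑ k ∈ Finset.range (n + 1), q ^ (2 * k)) • Finsupp.single (m, n) 1)
    (hApd : ∀ m n : ℕ, Apd (Finsupp.single (m, n) 1) =
      Real.sqrt (∑ k ∈ Finset.range (n + 1), q ^ (2 * k)) • Finsupp.single (m, n + 1) 1) :
    ∀ m n : ℕ, (Apu ∘ₗ Au + Apd ∘ₗ Ad) (Finsupp.single (m, n) 1) =
      (∑ k ∈ Finset.range (m + n), q ^ (2 * k)) • Finsupp.single (m, n) 1 := by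
  intro m n
  have hup : ∀ m n : ℕ, Apu (Au (Finsupp.single (m + 1, n) 1)) =
      ((∑ k ∈ Finset.range (m + 1), q ^ (2 * k)) * q ^ (2 * n)) •
        Finsupp.single (m + 1, n) 1 := by
    intro m n
    rw [hAu, map_smul, hApu, smul_smul]
    congr 1
    have h := Real.mul_self_sqrt (sum_nonneg' q hq (m + 1))
    have : q ^ n * q ^ n = q ^ (2 * n) := by rw [← pow_add]; ring_nf
    nlinarith [h, this]
  have hdn : ∀ m n : ℕ, Apd (Ad (Finsupp.single (m, n + 1) 1)) =
      (∑ k ∈ Finset.range (n + 1), q ^ (2 * k)) • Finsupp.single (m, n + 1) 1 := by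
    intro m n
    rw [hAd, map_smul, hApd, smul_smul, Real.mul_self_sqrt (sum_nonneg' q hq (n + 1))]
  simp only [LinearMap.add_apply, LinearMap.comp_apply]
  match m, n with
  | 0, 0 => rw [hAu0 0, hAd0 0, map_zero, map_zero]; simp
  | 0, n + 1 => rw [hAu0, hdn, map_zero, zero_add]; norm_num
  | m + 1, 0 =>
      rw [hAd0, map_zero, hup]
      simp [geom_split q (m + 1) 0]
  | m + 1, n + 1 =>
      rw [hup, hdn, ← add_smul, geom_split q (m + 1) (n + 1)]
end

section
/- Let K be a field of characteristic 0 and q ∈ K with q ≠ 0. In the setting of the fermionic CAR algebra with Fiore's deformed fermionic generators, the deformed annihilation and deformed creation operators satisfy the q-deformed Pusz–Woronowicz exchange relations: A↑² = 0, A↓² = 0, (A⁺_↑)² = 0, (A⁺_↓)² = 0, A↑·A↓ + q⁻¹·A↓·A↑ = 0, and A⁺_↑·A⁺_↓ + q·A⁺_↓·A⁺_↑ = 0. -/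
/-- **Quadratic q-exchange relations for Fiore's deformed fermionic generators.**
In a unital associative algebra over a field `K` of characteristic 0 with elements
`a↑ = a true`, `a↓ = a false`, `a⁺_↑ = ap true`, `a⁺_↓ = ap false` satisfying the CAR,
the deformed generators `A⁺_↑ = q^{-n↓} a⁺_↑`, `A↑ = a↑ q^{-n↓}`, `A⁺_↓ = a⁺_↓`,
`A↓ = a↓` (with `n↓ = a↓ a⁺_↓` and `q^{-n↓} = 1 + (q⁻¹ - 1) • n↓`) satisfy the
q-deformed Pusz–Woronowicz exchange relations: all squares vanish,
`A↑ A↓ + q⁻¹ A↓ A↑ = 0` and `A⁺_↑ A⁺_↓ + q A⁺_↓ A⁺_↑ = 0`. -/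
theorem deformed_fermionic_quadratic_relations
    (K : Type*) [Field K] [CharZero K] (𝒜 : Type*) [Ring 𝒜] [Algebra K 𝒜]
    (q : K) (hq : q ≠ 0) (a ap : Bool → 𝒜)
    (haa : ∀ i j, a i * a j + a j * a i = 0)
    (hpp : ∀ i j, ap i * ap j + ap j * ap i = 0)
    (hap : ∀ i j, a i * ap j + ap j * a i = if i = j then 1 else 0) :
    let qn : 𝒜 := 1 + (q⁻¹ - 1) • (a false * ap false)
    let Apu : 𝒜 := qn * ap true
    let Au : 𝒜 := a true * qn
    let Apd : 𝒜 := ap false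
    let Ad : 𝒜 := a false
    Au * Au = 0 ∧ Ad * Ad = 0 ∧ Apu * Apu = 0 ∧ Apd * Apd = 0 ∧
      Au * Ad + q⁻¹ • (Ad * Au) = 0 ∧ Apu * Apd + q • (Apd * Apu) = 0 := by
  intro qn Apu Au Apd Ad
  set au := a true with hau
  set ad := a false with had
  set pu := ap true with hpu
  set pd := ap false with hpd
  set c := q⁻¹ - 1 with hc
  -- a general halving lemma (uses char 0)
  have half : ∀ x : 𝒜, x + x = 0 → x = 0 := by
    intro x h
    have h2 : (2 : K) • x = 0 := by rw [two_smul]; exact h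
    have h3 : ((2⁻¹ : K) * 2) • x = 0 := by rw [mul_smul, h2, smul_zero]
    simpa using h3
  -- squares of generators vanish
  have hau2 : au * au = 0 := half _ (haa true true)
  have had2 : ad * ad = 0 := half _ (haa false false)
  have hpu2 : pu * pu = 0 := half _ (hpp true true)
  have hpd2 : pd * pd = 0 := half _ (hpp false false)
  -- anticommutation facts
  have hadau : ad * au = -(au * ad) := eq_neg_of_add_eq_zero_left (haa false true)
  have hpdpu : pd * pu = -(pu * pd) := eq_neg_of_add_eq_zero_left (hpp false true)
  have hpdau : pd * au = -(au * pd) :=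
    eq_neg_of_add_eq_zero_right (by simpa using hap true false)
  have hadpu : ad * pu = -(pu * ad) :=
    eq_neg_of_add_eq_zero_left (by simpa using hap false true)
  have hCAR : ad * pd + pd * ad = 1 := by simpa using hap false false
  have hCAR1 : pd * ad = 1 - ad * pd := eq_sub_of_add_eq' hCAR
  have hCAR2 : ad * pd = 1 - pd * ad := eq_sub_of_add_eq hCAR
  -- key commutation lemmas for qn
  have hqn_au : qn * au = au * qn := by
    show (1 + c • (ad * pd)) * au = au * (1 + c • (ad * pd))
    have h1 : ad * pd * au = au * (ad * pd) := by
      rw [mul_assoc, hpdau, mul_neg, ← mul_assoc ad au pd, hadau, neg_mul, neg_neg,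
        mul_assoc]
    rw [add_mul, mul_add, one_mul, mul_one, smul_mul_assoc, mul_smul_comm, h1]
  have hqn_pu : qn * pu = pu * qn := by
    show (1 + c • (ad * pd)) * pu = pu * (1 + c • (ad * pd))
    have h1 : ad * pd * pu = pu * (ad * pd) := by
      rw [mul_assoc, hpdpu, mul_neg, ← mul_assoc ad pu pd, hadpu, neg_mul, neg_neg,
        mul_assoc]
    rw [add_mul, mul_add, one_mul, mul_one, smul_mul_assoc, mul_smul_comm, h1]
  have hqn_ad : qn * ad = q⁻¹ • ad := by
    show (1 + c • (ad * pd)) * ad = q⁻¹ • ad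
    have h1 : ad * pd * ad = ad := by
      rw [mul_assoc, hCAR1, mul_sub, mul_one, ← mul_assoc, had2, zero_mul, sub_zero]
    rw [add_mul, one_mul, smul_mul_assoc, h1, hc, sub_smul, one_smul]
    abel
  have had_qn : ad * qn = ad := by
    show ad * (1 + c • (ad * pd)) = ad
    rw [mul_add, mul_one, mul_smul_comm, ← mul_assoc, had2, zero_mul, smul_zero, add_zero]
  have hpd_qn : pd * qn = q⁻¹ • pd := by
    show pd * (1 + c • (ad * pd)) = q⁻¹ • pd
    have h1 : pd * (ad * pd) = pd := by
      rw [hCAR2, mul_sub, mul_one, ← mul_assoc, hpd2, zero_mul, sub_zero]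
    rw [mul_add, mul_one, mul_smul_comm, h1, hc, sub_smul, one_smul]
    abel
  have hqn_pd : qn * pd = pd := by
    show (1 + c • (ad * pd)) * pd = pd
    rw [add_mul, one_mul, smul_mul_assoc, mul_assoc, hpd2, mul_zero, smul_zero, add_zero]
  refine ⟨?_, ?_, ?_, ?_, ?_, ?_⟩
  · -- Au * Au = 0
    show au * qn * (au * qn) = 0
    rw [mul_assoc, ← mul_assoc qn au qn, hqn_au, mul_assoc au qn qn,
      ← mul_assoc au au, hau2, zero_mul]
  · -- Ad * Ad = 0
    exact had2
  · -- Apu * Apu = 0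
    show qn * pu * (qn * pu) = 0
    rw [mul_assoc, ← mul_assoc pu qn pu, ← hqn_pu, mul_assoc qn pu pu, hpu2,
      mul_zero, mul_zero]
  · exact hpd2
  · -- Au * Ad + q⁻¹ • (Ad * Au) = 0
    show au * qn * ad + q⁻¹ • (ad * (au * qn)) = 0
    rw [mul_assoc, hqn_ad, mul_smul_comm, ← hqn_au, ← mul_assoc ad qn au, had_qn,
      ← smul_add, haa true false, smul_zero]
  · -- Apu * Apd + q • (Apd * Apu) = 0
    have h2 : pd * (qn * pu) = q⁻¹ • (pd * pu) := by
      rw [← mul_assoc, hpd_qn, smul_mul_assoc]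
    show qn * pu * pd + q • (pd * (qn * pu)) = 0
    rw [h2, smul_smul, mul_inv_cancel₀ hq, one_smul, hqn_pu, mul_assoc, hqn_pd]
    exact hpp true false
end

section
/- Let K be a field of characteristic 0 and q ∈ K with q ≠ 0. In the setting of the fermionic CAR algebra with Fiore's deformed fermionic generators, the mixed deformed generators satisfy the q-exchange relations A↑·A⁺_↓ + q·A⁺_↓·A↑ = 0 and A↓·A⁺_↑ + q·A⁺_↑·A↓ = 0. -/
/-- **Mixed q-exchange relations for Fiore's deformed fermionic generators.**
In a unital associative algebra over a field `K` of characteristic 0 with elements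
`a↑ = a true`, `a↓ = a false`, `a⁺_↑ = ap true`, `a⁺_↓ = ap false` satisfying the CAR,
the deformed generators `A⁺_↑ = q^{-n↓} a⁺_↑`, `A↑ = a↑ q^{-n↓}`, `A⁺_↓ = a⁺_↓`,
`A↓ = a↓` (with `n↓ = a↓ a⁺_↓` and `q^{-n↓} = 1 + (q⁻¹ - 1) • n↓`) satisfy
`A↑ A⁺_↓ + q A⁺_↓ A↑ = 0` and `A↓ A⁺_↑ + q A⁺_↑ A↓ = 0`. -/
theorem deformed_fermionic_mixed_relations
    (K : Type*) [Field K] [CharZero K] (𝒜 : Type*) [Ring 𝒜] [Algebra K 𝒜]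
    (q : K) (hq : q ≠ 0) (a ap : Bool → 𝒜)
    (haa : ∀ i j, a i * a j + a j * a i = 0)
    (hpp : ∀ i j, ap i * ap j + ap j * ap i = 0)
    (hap : ∀ i j, a i * ap j + ap j * a i = if i = j then 1 else 0) :
    let qn : 𝒜 := 1 + (q⁻¹ - 1) • (a false * ap false)
    let Apu : 𝒜 := qn * ap true
    let Au : 𝒜 := a true * qn
    let Apd : 𝒜 := ap false
    let Ad : 𝒜 := a false
    Au * Apd + q • (Apd * Au) = 0 ∧ Ad * Apu + q • (Apu * Ad) = 0 := by
  intro qn Apu Au Apd Ad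
  have half : ∀ x : 𝒜, x + x = 0 → x = 0 := by
    intro x h
    have h2 : (2 : K) • x = 0 := by rw [two_smul]; exact h
    have := congrArg (fun y => ((2 : K)⁻¹) • y) h2
    simpa [smul_smul, inv_mul_cancel₀ (two_ne_zero (α := K))] using this
  have haa' : ∀ i, a i * a i = 0 := fun i => half _ (haa i i)
  have hpp' : ∀ i, ap i * ap i = 0 := fun i => half _ (hpp i i)
  set c : K := q⁻¹ - 1 with hc
  set n : 𝒜 := a false * ap false with hn
  -- exchange relations with mixed indices
  have hfT : ap false * a true = -(a true * ap false) := by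
    have h := hap true false
    exact eq_neg_of_add_eq_zero_right (by simpa using h)
  have hTf : ap true * a false = -(a false * ap true) := by
    have h := hap false true
    exact eq_neg_of_add_eq_zero_right (by simpa using h)
  have haTf : a true * a false = -(a false * a true) :=
    eq_neg_of_add_eq_zero_right (by simpa [add_comm] using haa true false)
  have hpTf : ap true * ap false = -(ap false * ap true) :=
    eq_neg_of_add_eq_zero_right (by simpa [add_comm] using hpp true false)
  have hfT2 : a false * ap true = -(ap true * a false) := by
    have h := hap false true
    exact eq_neg_of_add_eq_zero_left (by simpa using h)
  have hpTf2 : ap false * ap true = -(ap true * ap false) := by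
    rw [hpTf, neg_neg]
  have hapff : ap false * a false = 1 - n := by
    have h := hap false false
    simp only [if_pos rfl] at h
    rw [hn]
    exact eq_sub_of_add_eq' h
  -- products with n
  have hn_apf : n * ap false = 0 := by
    rw [hn, mul_assoc, hpp' false, mul_zero]
  have haf_n : a false * n = 0 := by
    rw [hn, ← mul_assoc, haa' false, zero_mul]
  have hn_af : n * a false = a false := by
    rw [hn, mul_assoc, hapff, mul_sub, mul_one, hn, ← mul_assoc, haa' false,
      zero_mul, sub_zero]
  have hapf_n : ap false * n = ap false := by
    rw [hn, ← mul_assoc, hapff, sub_mul, one_mul, hn, mul_assoc, hpp' false,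
      mul_zero, sub_zero]
  have hnT : n * ap true = ap true * n := by
    calc n * ap true = a false * (ap false * ap true) := by rw [hn, mul_assoc]
      _ = -(a false * ap true) * ap false := by rw [hpTf2, mul_neg, neg_mul, mul_assoc]
      _ = ap true * n := by rw [hfT2, neg_neg, hn, mul_assoc]
  -- qn products
  have hqn_apf : qn * ap false = ap false := by
    show (1 + c • n) * ap false = ap false
    rw [add_mul, one_mul, smul_mul_assoc, hn_apf, smul_zero, add_zero]
  have hapf_qn : ap false * qn = q⁻¹ • ap false := by
    show ap false * (1 + c • n) = q⁻¹ • ap false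
    rw [mul_add, mul_one, mul_smul_comm, hapf_n, hc]
    module
  have haf_qn : a false * qn = a false := by
    show a false * (1 + c • n) = a false
    rw [mul_add, mul_one, mul_smul_comm, haf_n, smul_zero, add_zero]
  have hqn_af : qn * a false = q⁻¹ • a false := by
    show (1 + c • n) * a false = q⁻¹ • a false
    rw [add_mul, one_mul, smul_mul_assoc, hn_af, hc]
    module
  have hqn_apT : qn * ap true = ap true * qn := by
    show (1 + c • n) * ap true = ap true * (1 + c • n)
    rw [add_mul, mul_add, one_mul, mul_one, smul_mul_assoc, mul_smul_comm, hnT]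
  constructor
  · show a true * qn * ap false + q • (ap false * (a true * qn)) = 0
    rw [mul_assoc, hqn_apf, ← mul_assoc (ap false), hfT, neg_mul,
      mul_assoc, hapf_qn, mul_smul_comm, smul_neg, smul_smul,
      mul_inv_cancel₀ hq, one_smul, add_neg_cancel]
  · show a false * (qn * ap true) + q • (qn * ap true * a false) = 0
    rw [← mul_assoc, haf_qn, hqn_apT, mul_assoc (ap true), hqn_af,
      mul_smul_comm, smul_smul, mul_inv_cancel₀ hq, one_smul]
    simpa using hap false true
end

section
/- Let K be a field of characteristic 0 and q ∈ K with q ≠ 0. In the setting of the fermionic CAR algebra with Fiore's deformed fermionic generators, the diagonal deformed anticommutation relations hold: A↓·A⁺_↓ + A⁺_↓·A↓ = 1 and A↑·A⁺_↑ + A⁺_↑·A↑ = q⁻²·1 + (1 − q⁻²)·A⁺_↓·A↓. -/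
/-- **Diagonal deformed anticommutation relations for Fiore's deformed fermions.**
In a unital associative algebra over a field `K` of characteristic 0 with elements
`a↑ = a true`, `a↓ = a false`, `a⁺_↑ = ap true`, `a⁺_↓ = ap false` satisfying the CAR,
the deformed generators `A⁺_↑ = q^{-n↓} a⁺_↑`, `A↑ = a↑ q^{-n↓}`, `A⁺_↓ = a⁺_↓`,
`A↓ = a↓` (with `n↓ = a↓ a⁺_↓` and `q^{-n↓} = 1 + (q⁻¹ - 1) • n↓`) satisfy
`A↓ A⁺_↓ + A⁺_↓ A↓ = 1` and `A↑ A⁺_↑ + A⁺_↑ A↑ = q⁻² 1 + (1 − q⁻²) A⁺_↓ A↓`. -/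
theorem deformed_fermionic_diagonal_relations
    (K : Type*) [Field K] [CharZero K] (𝒜 : Type*) [Ring 𝒜] [Algebra K 𝒜]
    (q : K) (hq : q ≠ 0) (a ap : Bool → 𝒜)
    (haa : ∀ i j, a i * a j + a j * a i = 0)
    (hpp : ∀ i j, ap i * ap j + ap j * ap i = 0)
    (hap : ∀ i j, a i * ap j + ap j * a i = if i = j then 1 else 0) :
    let qn : 𝒜 := 1 + (q⁻¹ - 1) • (a false * ap false)
    let Apu : 𝒜 := qn * ap true
    let Au : 𝒜 := a true * qn
    let Apd : 𝒜 := ap false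
    let Ad : 𝒜 := a false
    Ad * Apd + Apd * Ad = 1 ∧
      Au * Apu + Apu * Au = (q ^ 2)⁻¹ • (1 : 𝒜) + (1 - (q ^ 2)⁻¹) • (Apd * Ad) := by
  intro qn Apu Au Apd Ad
  set x := a true with hx
  set xp := ap true with hxp
  set y := a false with hy
  set yp := ap false with hyp
  set n : 𝒜 := y * yp with hn
  set c : K := q⁻¹ - 1 with hc
  -- basic relations
  have h1 : x * xp + xp * x = 1 := by simpa using hap true true
  have h2 : y * yp + yp * y = 1 := by simpa using hap false false
  have hxy : x * y = -(y * x) := by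
    have := haa true false; simpa [eq_neg_iff_add_eq_zero] using this
  have hxyp : x * yp = -(yp * x) := by
    have := hap true false; simpa [eq_neg_iff_add_eq_zero] using this
  have hyxp : y * xp = -(xp * y) := by
    have := hap false true; simpa [eq_neg_iff_add_eq_zero] using this
  have hxpyp : xp * yp = -(yp * xp) := by
    have := hpp true false; simpa [eq_neg_iff_add_eq_zero] using this
  have hypx : yp * x = -(x * yp) := by rw [hxyp, neg_neg]
  have hxpy : xp * y = -(y * xp) := by rw [hyxp, neg_neg]
  have hypxp : yp * xp = -(xp * yp) := by rw [hxpyp, neg_neg]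
  have hy2 : y * y = 0 := by
    have h := haa false false
    have h2' : (2 : K) • (y * y) = 0 := by rw [two_smul]; simpa using h
    rcases smul_eq_zero.mp h2' with h | h
    · exact absurd h (by norm_num)
    · exact h
  -- n commutes with x and xp
  have hnx : n * x = x * n := by
    calc n * x = y * (yp * x) := by rw [hn, mul_assoc]
    _ = y * (-(x * yp)) := by rw [hypx]
    _ = -(y * x * yp) := by rw [mul_neg, ← mul_assoc]
    _ = (-(y * x)) * yp := by rw [neg_mul]
    _ = x * y * yp := by rw [← hxy]
    _ = x * n := by rw [hn, mul_assoc]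
  have hnxp : n * xp = xp * n := by
    calc n * xp = y * (yp * xp) := by rw [hn, mul_assoc]
    _ = y * (-(xp * yp)) := by rw [hypxp]
    _ = -(y * xp * yp) := by rw [mul_neg, ← mul_assoc]
    _ = (-(y * xp)) * yp := by rw [neg_mul]
    _ = xp * y * yp := by rw [← hxpy]
    _ = xp * n := by rw [hn, mul_assoc]
  -- n is idempotent
  have hypy : yp * y = 1 - n := by
    rw [hn, eq_sub_iff_add_eq, add_comm]; exact h2
  have hn2 : n * n = n := by
    calc n * n = y * (yp * y) * yp := by rw [hn]; noncomm_ring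
    _ = y * (1 - y * yp) * yp := by rw [hypy, hn]
    _ = y * yp - (y * y) * (yp * yp) := by noncomm_ring
    _ = n := by rw [hy2, hn]; simp
  -- qn commutes with x and xp
  have hqnx : qn * x = x * qn := by
    show (1 + c • n) * x = x * (1 + c • n)
    rw [add_mul, mul_add, one_mul, mul_one, smul_mul_assoc, mul_smul_comm, hnx]
  have hqnxp : qn * xp = xp * qn := by
    show (1 + c • n) * xp = xp * (1 + c • n)
    rw [add_mul, mul_add, one_mul, mul_one, smul_mul_assoc, mul_smul_comm, hnxp]
  -- qn squared
  have hd : c + (c + c * c) = (q ^ 2)⁻¹ - 1 := by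
    rw [hc]; field_simp; ring
  have hqn2 : qn * qn = 1 + ((q ^ 2)⁻¹ - 1) • n := by
    show (1 + c • n) * (1 + c • n) = 1 + ((q ^ 2)⁻¹ - 1) • n
    simp only [add_mul, mul_add, one_mul, mul_one, smul_mul_assoc, mul_smul_comm,
      smul_smul, hn2]
    rw [← hd]
    module
  constructor
  · simpa using hap false false
  · have hcomm2 : qn * qn * xp = xp * (qn * qn) := by
      rw [mul_assoc, hqnxp, ← mul_assoc, hqnxp, mul_assoc]
    have e1 : Au * Apu = x * xp * (qn * qn) := by
      show x * qn * (qn * xp) = _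
      rw [mul_assoc, ← mul_assoc qn qn xp, hcomm2, ← mul_assoc]
    have e2 : Apu * Au = xp * x * (qn * qn) := by
      show qn * xp * (x * qn) = _
      rw [hqnxp, mul_assoc, ← mul_assoc qn x qn, hqnx, mul_assoc x qn qn, ← mul_assoc]
    have key : Au * Apu + Apu * Au = (x * xp + xp * x) * (1 + ((q ^ 2)⁻¹ - 1) • n) := by
      rw [e1, e2, hqn2, add_mul]
    rw [key, h1, one_mul]
    show 1 + ((q ^ 2)⁻¹ - 1) • n = (q ^ 2)⁻¹ • (1 : 𝒜) + (1 - (q ^ 2)⁻¹) • (yp * y)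
    rw [hypy]
    module
end
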